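/- Let u be a nonconstant inner function and let φ ∈ L∞(𝕋) satisfy |φ| = 1 a.e. Then m(D_φ) = √( 1 − sup{ ‖T_{\overline{uφ}} f‖² + ‖H_{φ̄} f‖² : f ∈ K_u, ‖f‖ = 1 } ). Moreover, √( max(0, 1 − (‖T_{\overline{uφ}}|_{K_u}‖² + ‖H_{φ̄}|_{K_u}‖²)) ) ≤ m(D_φ) ≤ min( √(1 − ‖T_{\overline{uφ}}|_{K_u}‖²), √(1 − ‖H_{φ̄}|_{K_u}‖²) ), where T|_{K_u} denotes the restriction of the operator T to K_u. -/

import Mathlib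

open MeasureTheory Complex
open scoped InnerProductSpace ENNReal

noncomputable section

namespace DTTO

instance fact2pi : Fact (0 < 2 * Real.pi) := ⟨by positivity⟩

/-- The circle, realized as `ℝ / 2πℤ`. -/
abbrev 𝕋c := AddCircle (2 * Real.pi)

/-- Normalized Haar (Lebesgue) measure on the circle. -/
abbrev μT : Measure 𝕋c := AddCircle.haarAddCircle

/-- `L²(𝕋)`. -/
abbrev L2 := Lp ℂ 2 μT

/-- `L∞(𝕋)`. -/
abbrev Linf := Lp ℂ ⊤ μT

lemma memL2_smul (φ : Linf) (f : L2) : MemLp (⇑φ • ⇑f) 2 μT :=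
  (Lp.memLp f).smul (Lp.memLp φ)

/-- Multiplication operator `M_φ : L² → L²` by a function `φ ∈ L∞`. -/
def Mmul (φ : Linf) : L2 →L[ℂ] L2 :=
  LinearMap.mkContinuous
    { toFun := fun f => (memL2_smul φ f).toLp _
      map_add' := fun f g => by
        refine Lp.ext ?_
        filter_upwards [MemLp.coeFn_toLp (memL2_smul φ (f + g)),
          MemLp.coeFn_toLp (memL2_smul φ f), MemLp.coeFn_toLp (memL2_smul φ g),
          Lp.coeFn_add f g,
          Lp.coeFn_add ((memL2_smul φ f).toLp _) ((memL2_smul φ g).toLp _)] with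
            x h1 h2 h3 h4 h5
        rw [h1, h5]
        simp only [Pi.add_apply, h2, h3]
        simp only [Pi.smul_apply', h4, Pi.add_apply, smul_add]
      map_smul' := fun c f => by
        refine Lp.ext ?_
        filter_upwards [MemLp.coeFn_toLp (memL2_smul φ (c • f)),
          MemLp.coeFn_toLp (memL2_smul φ f),
          Lp.coeFn_smul c f,
          Lp.coeFn_smul c ((memL2_smul φ f).toLp _)] with x h1 h2 h3 h4
        rw [h1, RingHom.id_apply, h4]
        simp only [Pi.smul_apply, Pi.smul_apply', h2, h3]
        exact smul_comm _ _ _ }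
    ‖φ‖ (fun f => by
      simp only [LinearMap.coe_mk, AddHom.coe_mk]
      rw [Lp.norm_toLp, Lp.norm_def, Lp.norm_def]
      rw [← ENNReal.toReal_mul]
      refine ENNReal.toReal_mono ?_ ?_
      · exact ENNReal.mul_ne_top (Lp.eLpNorm_ne_top φ) (Lp.eLpNorm_ne_top f)
      · exact eLpNorm_smul_le_eLpNorm_top_mul_eLpNorm 2 (Lp.aestronglyMeasurable f) ⇑φ)

/-- The canonical inclusion `L∞ ⊆ L²` (the measure is finite). -/
def toL2 (φ : Linf) : L2 := ((Lp.memLp φ).mono_exponent le_top).toLp _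

/-- The Hardy space `H²`, the closed linear span in `L²` of the exponentials `e_n`, `n ≥ 0`. -/
def H2 : Submodule ℂ L2 :=
  (Submodule.span ℂ (Set.range fun n : ℕ => (fourierLp 2 (n : ℤ) : L2))).topologicalClosure

instance : CompleteSpace H2 := (Submodule.isClosed_topologicalClosure _).completeSpace_coe

/-- `H²₋ = L² ⊖ H²`. -/
def Hminus : Submodule ℂ L2 := H2ᗮ

instance : CompleteSpace Hminus := (Submodule.isClosed_orthogonal _).completeSpace_coe

/-- `H∞ = H² ∩ L∞`. -/
def MemHinf (φ : Linf) : Prop := toL2 φ ∈ H2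

/-- An inner function: an element of `H² ∩ L∞` of modulus one a.e. -/
structure IsInnerFn (u : Linf) : Prop where
  memH2 : MemHinf u
  unimod : ∀ᵐ z ∂μT, ‖u z‖ = 1

/-- `u` is nonconstant (not a.e. equal to a constant). -/
def Nonconst (u : Linf) : Prop := ¬ ∃ c : ℂ, (⇑u : 𝕋c → ℂ) =ᵐ[μT] fun _ => c

/-- The subspace `uH²` of `L²`. -/
def uH2 (u : Linf) : Submodule ℂ L2 := H2.map (Mmul u).toLinearMap

/-- The model space `K_u = H² ⊖ uH² = H² ∩ (uH²)ᗮ`. -/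
def Ku (u : Linf) : Submodule ℂ L2 := H2 ⊓ (uH2 u)ᗮ

lemma isClosed_Ku (u : Linf) : IsClosed ((Ku u : Set L2)) := by
  have h : (Ku u : Set L2) = (H2 : Set L2) ∩ ((uH2 u)ᗮ : Set L2) := rfl
  rw [h]
  exact (Submodule.isClosed_topologicalClosure _).inter (Submodule.isClosed_orthogonal _)

instance (u : Linf) : CompleteSpace (Ku u) := (isClosed_Ku u).completeSpace_coe

/-- `K_u^⊥ = L² ⊖ K_u`. -/
def KuP (u : Linf) : Submodule ℂ L2 := (Ku u)ᗮ

instance (u : Linf) : CompleteSpace (KuP u) := (Submodule.isClosed_orthogonal _).completeSpace_coe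

/-- Dual truncated Toeplitz operator `D_φ` on `K_u^⊥`. -/
def Dop (u φ : Linf) : KuP u →L[ℂ] KuP u :=
  (KuP u).orthogonalProjectionOnto ∘L Mmul φ ∘L (KuP u).subtypeL

/-- Truncated Toeplitz operator `A_φ` on `K_u`. -/
def Aop (u φ : Linf) : Ku u →L[ℂ] Ku u :=
  (Ku u).orthogonalProjectionOnto ∘L Mmul φ ∘L (Ku u).subtypeL

/-- The operator `B_φ : K_u → K_u^⊥`, `B_φ f = (I - P_{K_u})(φ f)`. -/
def Bop (u φ : Linf) : Ku u →L[ℂ] KuP u :=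
  (KuP u).orthogonalProjectionOnto ∘L Mmul φ ∘L (Ku u).subtypeL

/-- Toeplitz operator `T_φ : H² → H²`. -/
def Top (φ : Linf) : H2 →L[ℂ] H2 :=
  H2.orthogonalProjectionOnto ∘L Mmul φ ∘L H2.subtypeL

/-- Hankel operator `H_φ : H² → H²₋`. -/
def Hop (φ : Linf) : H2 →L[ℂ] Hminus :=
  Hminus.orthogonalProjectionOnto ∘L Mmul φ ∘L H2.subtypeL

/-- The exponential `e₁(ζ) = ζ` as an element of `L∞`. -/
def e1 : Linf := fourierLp ⊤ 1

/-- The exponential `e₋₁(ζ) = ζ̄` as an element of `L∞`. -/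
def eneg1 : Linf := fourierLp ⊤ (-1)

/-- The operator `Q : H²₋ → H²₋`, `Q g = P₋(e₁ g)`. -/
def Qop : Hminus →L[ℂ] Hminus :=
  Hminus.orthogonalProjectionOnto ∘L Mmul e1 ∘L Hminus.subtypeL

/-- `u(0)`, the 0-th Fourier coefficient. -/
def coef0 (u : Linf) : ℂ := fourierCoeff (⇑u) 0

/-- Minimum modulus of a bounded operator. -/
def minMod {E F : Type*} [NormedAddCommGroup E] [NormedSpace ℂ E]
    [NormedAddCommGroup F] [NormedSpace ℂ F] (T : E →L[ℂ] F) : ℝ :=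
  ⨅ x : {x : E // ‖x‖ = 1}, ‖T x.1‖

/-- Complex conjugation on `L∞`. -/
lemma memLinf_star (φ : Linf) : MemLp (fun z => (starRingEnd ℂ) (φ z)) ⊤ μT := by
  refine ⟨continuous_star.comp_aestronglyMeasurable (Lp.aestronglyMeasurable φ), ?_⟩
  rw [eLpNorm_congr_norm_ae (g := ⇑φ) (Filter.Eventually.of_forall fun z => norm_star _)]
  exact Lp.eLpNorm_lt_top φ

/-- The complex conjugate `φ̄ ∈ L∞` of `φ ∈ L∞`. -/
def conjL (φ : Linf) : Linf := (memLinf_star φ).toLp _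

lemma memLinf_mul (φ ψ : Linf) : MemLp (⇑φ • ⇑ψ) ⊤ μT :=
  (Lp.memLp ψ).smul (Lp.memLp φ)

/-- The pointwise product of two elements of `L∞`. -/
def mulL (φ ψ : Linf) : Linf := (memLinf_mul φ ψ).toLp _

end DTTO

namespace DTTO

lemma inner_fourierLp_eq_zero {m n : ℤ} (h : m ≠ n) :
    (inner ℂ (fourierLp 2 m : L2) (fourierLp 2 n : L2) : ℂ) = 0 := by
  have hcoe := congrFun (coe_fourierBasis (T := 2 * Real.pi))
  have h2 := (fourierBasis (T := 2 * Real.pi)).orthonormal.2 (i := m) (j := n) h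
  simpa only [hcoe] using h2

lemma span_le_orth_em1 :
    Submodule.span ℂ (Set.range fun n : ℕ => (fourierLp 2 (n : ℤ) : L2))
      ≤ (ℂ ∙ (fourierLp 2 (-1) : L2))ᗮ := by
  rw [Submodule.span_le]
  rintro x ⟨n, rfl⟩
  rw [SetLike.mem_coe, Submodule.mem_orthogonal]
  intro w hw
  obtain ⟨c, rfl⟩ := Submodule.mem_span_singleton.1 hw
  rw [inner_smul_left, inner_fourierLp_eq_zero (by omega : (-1 : ℤ) ≠ (n : ℤ)), mul_zero]

lemma H2_le_orth_em1 : H2 ≤ (ℂ ∙ (fourierLp 2 (-1) : L2))ᗮ :=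
  Submodule.topologicalClosure_minimal _ span_le_orth_em1 (Submodule.isClosed_orthogonal _)

/-- `e₋₁ ∈ H²₋`. -/
lemma em1_mem : (fourierLp 2 (-1) : L2) ∈ Hminus := by
  unfold Hminus
  rw [Submodule.mem_orthogonal]
  intro v hv
  have h := H2_le_orth_em1 hv
  rw [Submodule.mem_orthogonal] at h
  exact inner_eq_zero_symm.mp (h _ (Submodule.mem_span_singleton_self _))

/-- `e₋₁` as an element of `H²₋`. -/
def em1 : Hminus := ⟨(fourierLp 2 (-1) : L2), em1_mem⟩

/-- For `f ∈ K_u`, the function `u f ∈ uH² ⊆ K_u^⊥`. -/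
lemma mul_mem_KuP (u : Linf) (f : Ku u) : Mmul u (f : L2) ∈ KuP u := by
  unfold KuP
  rw [Submodule.mem_orthogonal]
  intro v hv
  have hv2 : v ∈ (uH2 u)ᗮ := (Submodule.mem_inf.1 hv).2
  have hm : Mmul u (f : L2) ∈ uH2 u :=
    Submodule.mem_map_of_mem (Submodule.mem_inf.1 f.2).1
  rw [Submodule.mem_orthogonal] at hv2
  exact inner_eq_zero_symm.mp (hv2 _ hm)

lemma Ku_le_H2 (u : Linf) : Ku u ≤ H2 := inf_le_left

/-- The inclusion `K_u ⊆ H²` as a continuous linear map. -/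
def KuIncl (u : Linf) : Ku u →L[ℂ] H2 :=
  LinearMap.mkContinuous (Submodule.inclusion (Ku_le_H2 u)) 1
    (fun f => by rw [one_mul]; exact le_of_eq rfl)

end DTTO

namespace DTTO

open Filter
open scoped Topology





lemma Mmul_coe (φ : Linf) (f : L2) : (Mmul φ f : 𝕋c → ℂ) =ᵐ[μT] fun z => φ z * f z :=
  ((memL2_smul φ f).coeFn_toLp).trans (Filter.Eventually.of_forall fun z => rfl)

lemma conjL_coe (φ : Linf) : (conjL φ : 𝕋c → ℂ) =ᵐ[μT] fun z => (starRingEnd ℂ) (φ z) :=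
  (memLinf_star φ).coeFn_toLp

lemma mulL_coe (φ ψ : Linf) : (mulL φ ψ : 𝕋c → ℂ) =ᵐ[μT] fun z => φ z * ψ z :=
  ((memLinf_mul φ ψ).coeFn_toLp).trans (Filter.Eventually.of_forall fun z => rfl)

lemma toL2_coe (φ : Linf) : (toL2 φ : 𝕋c → ℂ) =ᵐ[μT] ⇑φ :=
  MemLp.coeFn_toLp _

/-- inner ℂ adjoint identity for multiplication operators -/
lemma inner_Mmul_left (φ : Linf) (f g : L2) :
    (inner ℂ (Mmul φ f) g : ℂ) = inner ℂ f (Mmul (conjL φ) g) := by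
  rw [MeasureTheory.L2.inner_def, MeasureTheory.L2.inner_def]
  refine integral_congr_ae ?_
  filter_upwards [Mmul_coe φ f, Mmul_coe (conjL φ) g, conjL_coe φ] with z h1 h2 h3
  simp only [RCLike.inner_apply, h1, h2, h3, map_mul]
  ring

lemma Mmul_Mmul (φ ψ : Linf) (f : L2) : Mmul φ (Mmul ψ f) = Mmul (mulL φ ψ) f := by
  refine Lp.ext ?_
  filter_upwards [Mmul_coe φ (Mmul ψ f), Mmul_coe ψ f, Mmul_coe (mulL φ ψ) f, mulL_coe φ ψ]
    with z h1 h2 h3 h4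
  rw [h1, h2, h3, h4]; ring

lemma Mmul_conj_Mmul {φ : Linf} (h : ∀ᵐ z ∂μT, ‖φ z‖ = 1) (f : L2) :
    Mmul (conjL φ) (Mmul φ f) = f := by
  refine Lp.ext ?_
  filter_upwards [Mmul_coe (conjL φ) (Mmul φ f), Mmul_coe φ f, conjL_coe φ, h] with z h1 h2 h3 h4
  rw [h1, h2, h3]
  have : (starRingEnd ℂ) (φ z) * φ z = 1 := by
    rw [Complex.conj_mul']
    simp [h4]
  rw [← mul_assoc, this, one_mul]




lemma Mmul_fourierLp (k m : ℤ) :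
    Mmul (fourierLp ⊤ k) (fourierLp 2 m) = (fourierLp 2 (k + m) : L2) := by
  refine Lp.ext ?_
  filter_upwards [Mmul_coe (fourierLp ⊤ k) (fourierLp 2 m), coeFn_fourierLp (T := 2*Real.pi) ⊤ k,
    coeFn_fourierLp (T := 2*Real.pi) 2 m, coeFn_fourierLp (T := 2*Real.pi) 2 (k+m)]
    with z h1 h2 h3 h4
  rw [h1, h2, h3, h4, fourier_add]

lemma Mmul_en_mem_H2 (n : ℕ) {f : L2} (hf : f ∈ H2) : Mmul (fourierLp ⊤ (n : ℤ)) f ∈ H2 := by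
  set S : Submodule ℂ L2 := H2.comap (Mmul (fourierLp ⊤ (n : ℤ))).toLinearMap with hS
  have hclosed : IsClosed (S : Set L2) :=
    IsClosed.preimage (Mmul (fourierLp ⊤ (n : ℤ))).continuous
      (Submodule.isClosed_topologicalClosure _)
  have hle : H2 ≤ S := by
    refine Submodule.topologicalClosure_minimal _ ?_ hclosed
    rw [Submodule.span_le]
    rintro x ⟨m, rfl⟩
    simp only [SetLike.mem_coe, hS, Submodule.mem_comap, ContinuousLinearMap.coe_coe]
    rw [Mmul_fourierLp]
    apply Submodule.le_topologicalClosure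
    exact Submodule.subset_span ⟨n + m, by push_cast; ring_nf⟩
  exact hle hf

lemma Mmul_mem_H2 {u : Linf} (hu : MemHinf u) {f : L2} (hf : f ∈ H2) : Mmul u f ∈ H2 := by
  set S : Submodule ℂ L2 := H2.comap (Mmul u).toLinearMap with hS
  have hclosed : IsClosed (S : Set L2) :=
    IsClosed.preimage (Mmul u).continuous (Submodule.isClosed_topologicalClosure _)
  have hle : H2 ≤ S := by
    refine Submodule.topologicalClosure_minimal _ ?_ hclosed
    rw [Submodule.span_le]
    rintro x ⟨m, rfl⟩
    simp only [SetLike.mem_coe, hS, Submodule.mem_comap, ContinuousLinearMap.coe_coe]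
    have heq : Mmul u (fourierLp 2 (m : ℤ)) = Mmul (fourierLp ⊤ (m : ℤ)) (toL2 u) := by
      refine Lp.ext ?_
      filter_upwards [Mmul_coe u (fourierLp 2 (m : ℤ)),
        Mmul_coe (fourierLp ⊤ (m : ℤ)) (toL2 u), coeFn_fourierLp (T := 2*Real.pi) 2 (m : ℤ),
        coeFn_fourierLp (T := 2*Real.pi) ⊤ (m : ℤ),
        (show (toL2 u : 𝕋c → ℂ) =ᵐ[μT] ⇑u from MemLp.coeFn_toLp _)] with z h1 h2 h3 h4 h5
      rw [h1, h2, h3, h4, h5]; ring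
    rw [heq]
    exact Mmul_en_mem_H2 m hu
  exact hle hf

lemma uH2_le_H2 {u : Linf} (hu : MemHinf u) : uH2 u ≤ H2 := by
  rintro x ⟨f, hf, rfl⟩
  exact Mmul_mem_H2 hu hf

lemma isometry_Mmul {φ : Linf} (h : ∀ᵐ z ∂μT, ‖φ z‖ = 1) :
    Isometry (Mmul φ) := by
  refine AddMonoidHomClass.isometry_of_norm _ fun f => ?_
  rw [Lp.norm_def, Lp.norm_def]
  congr 1
  refine eLpNorm_congr_norm_ae ?_
  filter_upwards [Mmul_coe φ f, h] with z h1 h2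
  simp [h1, map_mul, h2]

lemma isClosed_uH2 {u : Linf} (h : ∀ᵐ z ∂μT, ‖u z‖ = 1) :
    IsClosed ((uH2 u : Set L2)) := by
  have : (uH2 u : Set L2) = (Mmul u) '' (H2 : Set L2) := rfl
  rw [this]
  exact ((isometry_Mmul h).isClosedEmbedding).isClosedMap _
    (Submodule.isClosed_topologicalClosure _)




lemma Hminus_le_KuP (u : Linf) : Hminus ≤ KuP u := Submodule.orthogonal_le (Ku_le_H2 u)

lemma uH2_le_KuP (u : Linf) : uH2 u ≤ KuP u := by
  intro w hw
  rw [KuP, Submodule.mem_orthogonal]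
  intro x hx
  have hx2 : x ∈ (uH2 u)ᗮ := (Submodule.mem_inf.1 hx).2
  exact inner_eq_zero_symm.mp (((Submodule.mem_orthogonal _ _).1 hx2) w hw)

lemma uH2_orth_Hminus {u : Linf} (hu : MemHinf u) {v w : L2}
    (hv : v ∈ uH2 u) (hw : w ∈ Hminus) : (inner ℂ v w : ℂ) = 0 :=
  (Submodule.mem_orthogonal _ _).1 hw v (uH2_le_H2 hu hv)

/-- Decomposition of the projection onto `K_u^⊥` as sum of projections onto `uH²` and `H²₋`. -/
lemma proj_KuP_eq {u : Linf} (hu : IsInnerFn u) (g : L2) :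
    haveI : CompleteSpace (uH2 u) := (isClosed_uH2 hu.unimod).completeSpace_coe
    ((KuP u).orthogonalProjectionOnto g : L2)
      = ((uH2 u).orthogonalProjectionOnto g : L2) + (Hminus.orthogonalProjectionOnto g : L2) := by
  haveI : CompleteSpace (uH2 u) := (isClosed_uH2 hu.unimod).completeSpace_coe
  refine Submodule.eq_starProjection_of_mem_of_inner_eq_zero (K := KuP u) ?_ ?_
  · exact Submodule.add_mem _ (uH2_le_KuP u (Submodule.coe_mem _))
      (Hminus_le_KuP u (Submodule.coe_mem _))
  · intro w hw
    -- w ∈ KuP u; g - P_uH2 g - P_Hminus g ∈ Ku = KuPᗮ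
    have hmem : g - (((uH2 u).orthogonalProjectionOnto g : L2)
        + (Hminus.orthogonalProjectionOnto g : L2)) ∈ Ku u := by
      rw [Ku, Submodule.mem_inf]
      constructor
      · -- in H2 : g - P_Hminus g = P_H2 g ∈ H2, minus P_uH2 g ∈ H2
        have key : (H2.orthogonalProjectionOnto g : L2) + (Hminus.orthogonalProjectionOnto g : L2)
            = g := Submodule.starProjection_add_starProjection_orthogonal (K := H2) g
        have h1 : g - (Hminus.orthogonalProjectionOnto g : L2)
            = (H2.orthogonalProjectionOnto g : L2) := by
          exact sub_eq_iff_eq_add.mpr key.symm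
        have : g - (((uH2 u).orthogonalProjectionOnto g : L2)
            + (Hminus.orthogonalProjectionOnto g : L2))
            = (H2.orthogonalProjectionOnto g : L2) - ((uH2 u).orthogonalProjectionOnto g : L2) := by
          rw [← h1]; abel
        rw [this]
        exact Submodule.sub_mem _ (Submodule.coe_mem _)
          (uH2_le_H2 hu.memH2 (Submodule.coe_mem _))
      · -- orthogonal to uH2
        rw [Submodule.mem_orthogonal]
        intro v hv
        rw [inner_sub_right, inner_add_right]
        have h2 : (inner ℂ v ((Hminus.orthogonalProjectionOnto g : L2)) : ℂ) = 0 :=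
          uH2_orth_Hminus hu.memH2 hv (Submodule.coe_mem _)
        have h3 : (inner ℂ v (g - ((uH2 u).orthogonalProjectionOnto g : L2)) : ℂ) = 0 := by
          rw [inner_eq_zero_symm]
          exact Submodule.starProjection_inner_eq_zero (K := uH2 u) g v hv
        rw [inner_sub_right] at h3
        rw [h2]
        linear_combination h3
    exact (Submodule.mem_orthogonal (Ku u) w).1 hw _ hmem

lemma norm_proj_KuP_sq {u : Linf} (hu : IsInnerFn u) (g : L2) :
    haveI : CompleteSpace (uH2 u) := (isClosed_uH2 hu.unimod).completeSpace_coe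
    ‖(KuP u).orthogonalProjectionOnto g‖ ^ 2
      = ‖(uH2 u).orthogonalProjectionOnto g‖ ^ 2 + ‖Hminus.orthogonalProjectionOnto g‖ ^ 2 := by
  haveI : CompleteSpace (uH2 u) := (isClosed_uH2 hu.unimod).completeSpace_coe
  have h := proj_KuP_eq hu g
  rw [show ‖(KuP u).orthogonalProjectionOnto g‖ = ‖((KuP u).orthogonalProjectionOnto g : L2)‖ from rfl, h]
  rw [show ∀ x : uH2 u, ‖x‖ = ‖(x : L2)‖ from fun _ => rfl]
  rw [show ∀ x : Hminus, ‖x‖ = ‖(x : L2)‖ from fun _ => rfl]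
  simp only [sq]
  exact norm_add_sq_eq_norm_sq_add_norm_sq_of_inner_eq_zero _ _
    (uH2_orth_Hminus hu.memH2 (Submodule.coe_mem _) (Submodule.coe_mem _))



lemma norm_Mmul_of_unimod {φ : Linf} (h : ∀ᵐ z ∂μT, ‖φ z‖ = 1) (f : L2) :
    ‖Mmul φ f‖ = ‖f‖ :=
  (isometry_Mmul h).norm_map_of_map_zero (map_zero _) f

lemma inner_Mmul_right (φ : Linf) (f g : L2) :
    (inner ℂ f (Mmul φ g) : ℂ) = inner ℂ (Mmul (conjL φ) f) g := by
  rw [MeasureTheory.L2.inner_def, MeasureTheory.L2.inner_def]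
  refine integral_congr_ae ?_
  filter_upwards [Mmul_coe φ g, Mmul_coe (conjL φ) f, conjL_coe φ] with z h1 h2 h3
  simp only [RCLike.inner_apply, h1, h2, h3, map_mul, Complex.conj_conj]
  ring

lemma proj_uH2_eq {u : Linf} (hu : IsInnerFn u) (g : L2) :
    haveI : CompleteSpace (uH2 u) := (isClosed_uH2 hu.unimod).completeSpace_coe
    ((uH2 u).orthogonalProjectionOnto g : L2)
      = Mmul u (H2.orthogonalProjectionOnto (Mmul (conjL u) g)) := by
  haveI : CompleteSpace (uH2 u) := (isClosed_uH2 hu.unimod).completeSpace_coe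
  refine Submodule.eq_starProjection_of_mem_of_inner_eq_zero (K := uH2 u) ?_ ?_
  · exact Submodule.mem_map_of_mem (Submodule.coe_mem _)
  · rintro w ⟨k, hk, rfl⟩
    simp only [ContinuousLinearMap.coe_coe]
    rw [inner_sub_left, inner_Mmul_right u g k, inner_Mmul_left u _ ((Mmul u) k),
      Mmul_conj_Mmul hu.unimod]
    have h0 : (inner ℂ ((Mmul (conjL u)) g
        - (H2.orthogonalProjectionOnto ((Mmul (conjL u)) g) : L2)) k : ℂ) = 0 := by
      refine (Submodule.mem_orthogonal' _ _).1 ?_ k hk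
      exact Submodule.sub_starProjection_mem_orthogonal (K := H2) _
    rw [inner_sub_left] at h0
    linear_combination h0

lemma norm_proj_uH2 {u : Linf} (hu : IsInnerFn u) (g : L2) :
    haveI : CompleteSpace (uH2 u) := (isClosed_uH2 hu.unimod).completeSpace_coe
    ‖(uH2 u).orthogonalProjectionOnto g‖
      = ‖H2.orthogonalProjectionOnto (Mmul (conjL u) g)‖ := by
  haveI : CompleteSpace (uH2 u) := (isClosed_uH2 hu.unimod).completeSpace_coe
  have h := proj_uH2_eq hu g
  have hcu : ∀ᵐ z ∂μT, ‖(conjL u) z‖ = 1 := by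
    filter_upwards [conjL_coe u, hu.unimod] with z h1 h2
    rw [h1]; simpa using h2
  calc ‖(uH2 u).orthogonalProjectionOnto g‖
      = ‖((uH2 u).orthogonalProjectionOnto g : L2)‖ := rfl
    _ = ‖Mmul u (H2.orthogonalProjectionOnto (Mmul (conjL u) g) : L2)‖ := by rw [h]
    _ = ‖(H2.orthogonalProjectionOnto (Mmul (conjL u) g) : L2)‖ :=
        norm_Mmul_of_unimod hu.unimod _
    _ = _ := rfl

/-- Key pointwise identity: for `f ∈ K_u`,
`‖P_{K_u^⊥}(φ̄ f)‖² = ‖T_{conj(uφ)} f‖² + ‖H_{φ̄} f‖²`. -/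
lemma norm_Bop_sq {u : Linf} (φ : Linf) (hu : IsInnerFn u) (f : Ku u) :
    ‖(KuP u).orthogonalProjectionOnto (Mmul (conjL φ) (f : L2))‖ ^ 2
      = ‖Top (conjL (mulL u φ)) (KuIncl u f)‖ ^ 2 + ‖Hop (conjL φ) (KuIncl u f)‖ ^ 2 := by
  haveI : CompleteSpace (uH2 u) := (isClosed_uH2 hu.unimod).completeSpace_coe
  have hsplit := norm_proj_KuP_sq hu (Mmul (conjL φ) (f : L2))
  rw [hsplit]
  congr 1
  · rw [norm_proj_uH2 hu]
    have hcomp : Mmul (conjL u) (Mmul (conjL φ) (f : L2))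
        = Mmul (conjL (mulL u φ)) (f : L2) := by
      refine Lp.ext ?_
      filter_upwards [Mmul_coe (conjL u) (Mmul (conjL φ) (f : L2)),
        Mmul_coe (conjL φ) (f : L2), Mmul_coe (conjL (mulL u φ)) (f : L2),
        conjL_coe u, conjL_coe φ, conjL_coe (mulL u φ), mulL_coe u φ] with z h1 h2 h3 h4 h5 h6 h7
      rw [h1, h2, h3, h4, h5, h6, h7, map_mul]
      ring
    rw [hcomp]
    rfl



section Real

variable {ι : Type*} [Nonempty ι]

lemma iInf_sqrt_one_sub (s : ι → ℝ) (h0 : ∀ i, 0 ≤ s i) (h1 : ∀ i, s i ≤ 1) :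
    ⨅ i, Real.sqrt (1 - s i) = Real.sqrt (1 - ⨆ i, s i) := by
  have hbdd : BddAbove (Set.range s) := ⟨1, by rintro x ⟨i, rfl⟩; exact h1 i⟩
  set M := ⨆ i, s i with hM
  refine le_antisymm ?_ (le_ciInf fun i => Real.sqrt_le_sqrt (by
    have := le_ciSup hbdd i; linarith))
  have hev : ∀ ε ∈ Set.Ioi (0:ℝ), (⨅ i, Real.sqrt (1 - s i)) ≤ Real.sqrt (1 - M + ε) := by
    intro ε hε
    have hlt : M - ε < M := by simp at hε; linarith
    obtain ⟨i, hi⟩ := exists_lt_of_lt_ciSup (by rw [← hM]; exact hlt)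
    refine le_trans (ciInf_le ⟨0, by rintro x ⟨j, rfl⟩; exact Real.sqrt_nonneg _⟩ i) ?_
    exact Real.sqrt_le_sqrt (by linarith)
  have htend : Tendsto (fun ε : ℝ => Real.sqrt (1 - M + ε)) (𝓝[>] 0)
      (𝓝 (Real.sqrt (1 - M))) := by
    have : ContinuousAt (fun ε : ℝ => Real.sqrt (1 - M + ε)) 0 :=
      (Real.continuous_sqrt.comp (by continuity)).continuousAt
    simpa using this.continuousWithinAt.tendsto
  exact ge_of_tendsto htend (Filter.eventually_inf_principal.2
    (Filter.Eventually.of_forall hev))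

lemma iSup_sq (s : ι → ℝ) (h0 : ∀ i, 0 ≤ s i) (hbdd : BddAbove (Set.range s)) :
    ⨆ i, (s i) ^ 2 = (⨆ i, s i) ^ 2 := by
  have hM0 : 0 ≤ ⨆ i, s i := le_trans (h0 (Classical.arbitrary ι)) (le_ciSup hbdd _)
  refine le_antisymm (ciSup_le fun i => pow_le_pow_left₀ (h0 i) (le_ciSup hbdd i) 2) ?_
  have hbdd2 : BddAbove (Set.range fun i => (s i)^2) := by
    obtain ⟨C, hC⟩ := hbdd
    refine ⟨max C 0 ^ 2, ?_⟩
    rintro x ⟨i, rfl⟩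
    exact pow_le_pow_left₀ (h0 i) (le_trans (hC ⟨i, rfl⟩) (le_max_left _ _)) 2
  have : (⨆ i, s i) ≤ Real.sqrt (⨆ i, (s i)^2) := by
    refine ciSup_le fun i => ?_
    rw [show s i = Real.sqrt ((s i)^2) from (Real.sqrt_sq (h0 i)).symm]
    exact Real.sqrt_le_sqrt (le_ciSup hbdd2 i)
  calc (⨆ i, s i)^2 ≤ Real.sqrt (⨆ i, (s i)^2) ^ 2 := pow_le_pow_left₀ hM0 this 2
    _ = ⨆ i, (s i)^2 := Real.sq_sqrt
        (le_trans (sq_nonneg _) (le_ciSup hbdd2 (Classical.arbitrary ι)))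

end Real

section SupNorm

variable {E F : Type*} [NormedAddCommGroup E] [NormedSpace ℂ E]
  [NormedAddCommGroup F] [NormedSpace ℂ F]

lemma exists_norm_one {E : Type*} [NormedAddCommGroup E] [NormedSpace ℂ E] {x : E} (hx : x ≠ 0) :
    ∃ y : E, ‖y‖ = 1 := by
  refine ⟨((‖x‖ : ℂ))⁻¹ • x, ?_⟩
  rw [norm_smul, norm_inv, Complex.norm_real, Real.norm_eq_abs, abs_norm]
  field_simp [norm_pos_iff.2 hx |>.ne']

lemma iSup_sphere_norm (T : E →L[ℂ] F) (hne : Nonempty {x : E // ‖x‖ = 1}) :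
    ⨆ x : {x : E // ‖x‖ = 1}, ‖T x.1‖ = ‖T‖ := by
  haveI := hne
  have hbdd : BddAbove (Set.range fun x : {x : E // ‖x‖ = 1} => ‖T x.1‖) := by
    refine ⟨‖T‖, ?_⟩
    rintro r ⟨x, rfl⟩
    simpa [x.2] using T.le_opNorm x.1
  refine le_antisymm (ciSup_le fun x => by simpa [x.2] using T.le_opNorm x.1) ?_
  have hnn : 0 ≤ ⨆ x : {x : E // ‖x‖ = 1}, ‖T x.1‖ :=
    le_trans (norm_nonneg _) (le_ciSup hbdd (Classical.arbitrary _))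
  refine T.opNorm_le_bound hnn fun y => ?_
  rcases eq_or_ne y 0 with rfl | hy
  · simp
  · have hny : (0:ℝ) < ‖y‖ := norm_pos_iff.2 hy
    set x : E := ((‖y‖ : ℂ))⁻¹ • y with hx
    have hxnorm : ‖x‖ = 1 := by
      rw [hx, norm_smul, norm_inv, Complex.norm_real, Real.norm_eq_abs, abs_norm]
      field_simp
    have h1 : ‖T x‖ ≤ ⨆ x : {x : E // ‖x‖ = 1}, ‖T x.1‖ := le_ciSup hbdd ⟨x, hxnorm⟩
    have h2 : ‖T x‖ = ‖y‖⁻¹ * ‖T y‖ := by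
      rw [hx, _root_.map_smul, norm_smul, norm_inv, Complex.norm_real, Real.norm_eq_abs, abs_norm]
    rw [h2] at h1
    calc ‖T y‖ = ‖y‖ * (‖y‖⁻¹ * ‖T y‖) := by field_simp
      _ ≤ ‖y‖ * (⨆ x : {x : E // ‖x‖ = 1}, ‖T x.1‖) := by
          exact mul_le_mul_of_nonneg_left h1 (le_of_lt hny)
      _ = _ := mul_comm _ _

end SupNorm




lemma norm_fourierLp (n : ℤ) : ‖(fourierLp 2 n : L2)‖ = 1 := by
  have := (fourierBasis (T := 2 * Real.pi)).orthonormal.1 n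
  rwa [coe_fourierBasis] at this

lemma H2_inner_fourierLp_neg {f : L2} (hf : f ∈ H2) {n : ℤ} (hn : n < 0) :
    (inner ℂ (fourierLp 2 n : L2) f : ℂ) = 0 := by
  have hle : H2 ≤ (ℂ ∙ (fourierLp 2 n : L2))ᗮ := by
    refine Submodule.topologicalClosure_minimal _ ?_ (Submodule.isClosed_orthogonal _)
    rw [Submodule.span_le]
    rintro x ⟨m, rfl⟩
    rw [SetLike.mem_coe, Submodule.mem_orthogonal]
    intro w hw
    obtain ⟨c, rfl⟩ := Submodule.mem_span_singleton.1 hw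
    rw [inner_smul_left, inner_fourierLp_eq_zero (by omega : n ≠ (m : ℤ)), mul_zero]
  have h := hle hf
  rw [Submodule.mem_orthogonal] at h
  exact h _ (Submodule.mem_span_singleton_self _)

lemma fourierCoeff_eq_zero_of_mem_H2 {f : L2} (hf : f ∈ H2) {n : ℤ} (hn : n < 0) :
    fourierCoeff (⇑f) n = 0 := by
  rw [← fourierBasis_repr]
  rw [HilbertBasis.repr_apply_apply]
  have : (fourierBasis (T := 2 * Real.pi)) n = (fourierLp 2 n : L2) := by
    rw [← coe_fourierBasis]
  rw [this]
  exact H2_inner_fourierLp_neg hf hn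

lemma fourierCoeff_congr_ae {f g : 𝕋c → ℂ} (h : f =ᵐ[μT] g) (n : ℤ) :
    fourierCoeff f n = fourierCoeff g n := by
  unfold fourierCoeff
  refine integral_congr_ae ?_
  filter_upwards [h] with z hz
  rw [hz]

lemma fourierCoeff_conj (f : 𝕋c → ℂ) (n : ℤ) :
    fourierCoeff (fun z => (starRingEnd ℂ) (f z)) n
      = (starRingEnd ℂ) (fourierCoeff f (-n)) := by
  unfold fourierCoeff
  rw [← integral_conj]
  refine integral_congr_ae (Filter.Eventually.of_forall fun z => ?_)
  simp only [smul_eq_mul, map_mul, neg_neg]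
  congr 1
  rw [← fourier_neg]

/-- If all nonzero Fourier coefficients of `f ∈ L²` vanish, `f` is a.e. constant. -/
lemma ae_const_of_coeffs {f : L2} (h : ∀ n : ℤ, n ≠ 0 → fourierCoeff (⇑f) n = 0) :
    ∃ c : ℂ, (⇑f : 𝕋c → ℂ) =ᵐ[μT] fun _ => c := by
  set c : ℂ := fourierCoeff (⇑f) 0 with hc
  refine ⟨c, ?_⟩
  have hv : f = c • (fourierLp 2 (0:ℤ) : L2) := by
    have hrepr : (fourierBasis (T := 2 * Real.pi)).repr (f - c • (fourierLp 2 (0:ℤ) : L2)) = 0 := by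
      ext m
      rw [map_sub, _root_.map_smul]
      simp only [lp.coeFn_sub, Pi.sub_apply, lp.coeFn_smul, Pi.smul_apply, lp.coeFn_zero,
        Pi.zero_apply]
      have h1 : (fourierBasis (T := 2 * Real.pi)).repr f m = fourierCoeff (⇑f) m :=
        fourierBasis_repr f m
      have h2 : (fourierBasis (T := 2 * Real.pi)).repr (fourierLp 2 (0:ℤ) : L2) m
          = if m = 0 then 1 else 0 := by
        have hb : (fourierLp 2 (0:ℤ) : L2) = (fourierBasis (T := 2 * Real.pi)) 0 := by
          rw [← coe_fourierBasis]
        rw [hb, HilbertBasis.repr_self]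
        classical
        rw [lp.single_apply]
        simp [eq_comm, Pi.single_apply]
      rcases eq_or_ne m 0 with rfl | hm
      · simp [h1, h2, ← hc]
      · simp [h1, h2, hm, h m hm]
    have h0 := (fourierBasis (T := 2 * Real.pi)).repr.map_eq_zero_iff.mp hrepr
    exact sub_eq_zero.mp h0
  rw [hv]
  filter_upwards [Lp.coeFn_smul c (fourierLp 2 (0:ℤ) : L2),
    coeFn_fourierLp (T := 2*Real.pi) 2 (0:ℤ)] with z h1 h2
  rw [h1, Pi.smul_apply, h2, fourier_zero, smul_eq_mul, mul_one]

lemma e0_mem_H2 : (fourierLp 2 (0:ℤ) : L2) ∈ H2 := by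
  apply Submodule.le_topologicalClosure
  exact Submodule.subset_span ⟨0, by norm_num⟩

/-- If `u` is a nonconstant inner ℂ function then `K_u ≠ ⊥`. -/
lemma Ku_ne_bot {u : Linf} (hu : IsInnerFn u) (hnc : Nonconst u) : Ku u ≠ ⊥ := by
  intro hbot
  haveI : CompleteSpace (uH2 u) := (isClosed_uH2 hu.unimod).completeSpace_coe
  -- e0 ∈ uH2
  have he0 : (fourierLp 2 (0:ℤ) : L2) ∈ uH2 u := by
    set e0 : L2 := (fourierLp 2 (0:ℤ) : L2) with he
    have hr : e0 - ((uH2 u).orthogonalProjectionOnto e0 : L2) ∈ Ku u := by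
      rw [Ku, Submodule.mem_inf]
      refine ⟨Submodule.sub_mem _ e0_mem_H2 (uH2_le_H2 hu.memH2 (Submodule.coe_mem _)), ?_⟩
      exact Submodule.sub_starProjection_mem_orthogonal (K := uH2 u) e0
    rw [hbot, Submodule.mem_bot, sub_eq_zero] at hr
    rw [hr]
    exact Submodule.coe_mem _
  obtain ⟨h, hhH2, hhu⟩ := he0
  -- a.e. u * h = 1
  have hae : ∀ᵐ z ∂μT, u z * h z = 1 := by
    have h1 : ((Mmul u) h : 𝕋c → ℂ) =ᵐ[μT] fun z => u z * h z := Mmul_coe u h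
    have h2 : ((fourierLp 2 (0:ℤ) : L2) : 𝕋c → ℂ) =ᵐ[μT] fourier 0 :=
      coeFn_fourierLp (T := 2*Real.pi) 2 (0:ℤ)
    rw [show (Mmul u).toLinearMap h = (Mmul u) h from rfl] at hhu
    rw [hhu] at h1
    filter_upwards [h1, h2] with z hz1 hz2
    rw [← hz1, hz2, fourier_zero]
  -- h = conj u a.e.
  have hconj : (⇑h : 𝕋c → ℂ) =ᵐ[μT] fun z => (starRingEnd ℂ) (u z) := by
    filter_upwards [hae, hu.unimod] with z h1 h2
    have habs : (starRingEnd ℂ) (u z) * (u z) = 1 := by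
      rw [Complex.conj_mul']
      simp [h2]
    calc h z = ((starRingEnd ℂ) (u z) * u z) * h z := by rw [habs, one_mul]
      _ = (starRingEnd ℂ) (u z) * (u z * h z) := by ring
      _ = (starRingEnd ℂ) (u z) := by rw [h1, mul_one]
  -- coefficients of u vanish off 0
  have hcoef : ∀ n : ℤ, n ≠ 0 → fourierCoeff (⇑(toL2 u)) n = 0 := by
    intro n hn
    rcases lt_or_gt_of_ne hn with hneg | hpos
    · exact fourierCoeff_eq_zero_of_mem_H2 hu.memH2 hneg
    · -- use h ∈ H2 and h = conj u
      have h1 : fourierCoeff (⇑h) (-n) = 0 :=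
        fourierCoeff_eq_zero_of_mem_H2 hhH2 (by omega)
      have h2 : fourierCoeff (⇑h) (-n)
          = fourierCoeff (fun z => (starRingEnd ℂ) (u z)) (-n) :=
        fourierCoeff_congr_ae hconj _
      rw [fourierCoeff_conj, neg_neg] at h2
      have h3 : fourierCoeff (⇑u) n = 0 := by
        have h4 := h2.symm.trans h1
        simpa using congrArg (starRingEnd ℂ) h4
      calc fourierCoeff (⇑(toL2 u)) n = fourierCoeff (⇑u) n :=
            fourierCoeff_congr_ae (MemLp.coeFn_toLp _) n
        _ = 0 := h3
  obtain ⟨c, hc⟩ := ae_const_of_coeffs hcoef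
  refine hnc ⟨c, ?_⟩
  calc (⇑u : 𝕋c → ℂ) =ᵐ[μT] ⇑(toL2 u) := (MemLp.coeFn_toLp _).symm
    _ =ᵐ[μT] fun _ => c := hc

lemma Ku_unit_nonempty {u : Linf} (hu : IsInnerFn u) (hnc : Nonconst u) :
    Nonempty {f : Ku u // ‖f‖ = 1} := by
  obtain ⟨x, hx0⟩ := (Submodule.ne_bot_iff _).mp (Ku_ne_bot hu hnc)
  obtain ⟨y, hy⟩ := exists_norm_one (E := Ku u) (x := ⟨x, hx0.1⟩)
    (by simp [Subtype.ext_iff, hx0.2])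
  exact ⟨⟨y, hy⟩⟩

lemma KuP_unit_nonempty (u : Linf) : Nonempty {f : KuP u // ‖f‖ = 1} := by
  refine ⟨⟨⟨(fourierLp 2 (-1) : L2), Hminus_le_KuP u em1_mem⟩, ?_⟩⟩
  show ‖(fourierLp 2 (-1) : L2)‖ = 1
  exact norm_fourierLp (-1)



/-- The operator `C : K_u^⊥ → K_u`, `C f = P_{K_u}(φ f)`. -/
def Cop (u φ : Linf) : KuP u →L[ℂ] Ku u :=
  (Ku u).orthogonalProjectionOnto ∘L Mmul φ ∘L (KuP u).subtypeL

lemma conjL_conjL (φ : Linf) : conjL (conjL φ) = φ := by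
  refine Lp.ext ?_
  filter_upwards [conjL_coe (conjL φ), conjL_coe φ] with z h1 h2
  rw [h1, h2, Complex.conj_conj]

lemma Cop_adjoint (u φ : Linf) :
    Bop u (conjL φ) = ContinuousLinearMap.adjoint (Cop u φ) := by
  rw [ContinuousLinearMap.eq_adjoint_iff]
  intro g f
  calc (inner ℂ (Bop u (conjL φ) g) f : ℂ)
      = inner ℂ (Mmul (conjL φ) ((g : L2))) ((f : L2)) := by
        rw [Bop]
        simp only [ContinuousLinearMap.comp_apply, Submodule.subtypeL_apply]
        exact Submodule.inner_orthogonalProjectionOnto_eq_of_mem_right (K := KuP u) f (Mmul (conjL φ) (g : L2))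
    _ = inner ℂ ((g : L2)) (Mmul φ ((f : L2))) := by
        rw [inner_Mmul_left, conjL_conjL]
    _ = inner ℂ g (Cop u φ f) := by
        rw [Cop]
        simp only [ContinuousLinearMap.comp_apply, Submodule.subtypeL_apply]
        exact (Submodule.inner_orthogonalProjectionOnto_eq_of_mem_left (K := Ku u) g (Mmul φ (f : L2))).symm

lemma norm_Bop_eq_norm_Cop (u φ : Linf) : ‖Bop u (conjL φ)‖ = ‖Cop u φ‖ := by
  rw [Cop_adjoint u φ]
  exact ContinuousLinearMap.adjoint.norm_map _




lemma sqrt_max_zero (x : ℝ) : Real.sqrt (max 0 x) = Real.sqrt x := by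
  rcases le_total x 0 with h | h
  · rw [max_eq_left h, Real.sqrt_zero, Real.sqrt_eq_zero_of_nonpos h]
  · rw [max_eq_right h]


set_option maxHeartbeats 2000000 in
/-- For unimodular `φ`: the exact formula
`m(D_φ) = √(1 - sup_{f ∈ K_u, ‖f‖=1} (‖T_{conj(uφ)} f‖² + ‖H_{φ̄} f‖²))`
together with the two-sided estimates. -/
theorem minMod_Dphi_formula_and_bounds (u φ : Linf) (hu : IsInnerFn u)
    (hnc : Nonconst u) (hmod : ∀ᵐ z ∂μT, ‖φ z‖ = 1) :
    minMod (Dop u φ)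
        = Real.sqrt (1 - ⨆ f : {f : Ku u // ‖f‖ = 1},
            (‖Top (conjL (mulL u φ)) (KuIncl u f.1)‖ ^ 2
              + ‖Hop (conjL φ) (KuIncl u f.1)‖ ^ 2))
    ∧ Real.sqrt (max 0 (1 - (‖Top (conjL (mulL u φ)) ∘L KuIncl u‖ ^ 2
          + ‖Hop (conjL φ) ∘L KuIncl u‖ ^ 2)))
        ≤ minMod (Dop u φ)
    ∧ minMod (Dop u φ)
        ≤ min (Real.sqrt (1 - ‖Top (conjL (mulL u φ)) ∘L KuIncl u‖ ^ 2))
            (Real.sqrt (1 - ‖Hop (conjL φ) ∘L KuIncl u‖ ^ 2)) := by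
  haveI hneP : Nonempty {f : KuP u // ‖f‖ = 1} := KuP_unit_nonempty u
  haveI hneK : Nonempty {f : Ku u // ‖f‖ = 1} := Ku_unit_nonempty hu hnc
  -- the function on the K_u sphere appearing in the statement
  set t : {f : Ku u // ‖f‖ = 1} → ℝ := fun f =>
    ‖Top (conjL (mulL u φ)) (KuIncl u f.1)‖ ^ 2
      + ‖Hop (conjL φ) (KuIncl u f.1)‖ ^ 2 with ht
  set s : {f : KuP u // ‖f‖ = 1} → ℝ := fun f => ‖Cop u φ f.1‖ ^ 2 with hs
  -- Pythagoras: for unit f, ‖D_φ f‖² = 1 - ‖C f‖²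
  have hpyth : ∀ f : {f : KuP u // ‖f‖ = 1},
      ‖Cop u φ f.1‖ ^ 2 + ‖Dop u φ f.1‖ ^ 2 = 1 := by
    intro f
    have h1 : ‖Mmul φ (f.1 : L2)‖ = 1 := by
      rw [norm_Mmul_of_unimod hmod]; exact f.2
    have hx := Submodule.norm_sq_eq_add_norm_sq_projection (Mmul φ (f.1 : L2)) (Ku u)
    rw [h1, one_pow] at hx
    have hC : ‖Cop u φ f.1‖ = ‖(Ku u).orthogonalProjectionOnto (Mmul φ (f.1 : L2))‖ := rfl
    have hD : ‖Dop u φ f.1‖ = ‖(Ku u)ᗮ.orthogonalProjectionOnto (Mmul φ (f.1 : L2))‖ := rfl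
    rw [hC, hD]
    exact hx.symm
  have hs0 : ∀ f, 0 ≤ s f := fun f => sq_nonneg _
  have hs1 : ∀ f, s f ≤ 1 := by
    intro f
    have := hpyth f
    have h2 : 0 ≤ ‖Dop u φ f.1‖ ^ 2 := sq_nonneg _
    simp only [hs]
    linarith
  -- minMod as sqrt of 1 - sup s
  have hmm : minMod (Dop u φ) = Real.sqrt (1 - ⨆ f, s f) := by
    rw [minMod, ← iInf_sqrt_one_sub s hs0 hs1]
    refine iInf_congr fun f => ?_
    have := hpyth f
    have hD : ‖Dop u φ f.1‖ = Real.sqrt (‖Dop u φ f.1‖ ^ 2) :=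
      (Real.sqrt_sq (norm_nonneg _)).symm
    rw [hD]
    congr 1
    simp only [hs]
    linarith
  -- sup s = ‖C‖²
  have hbddC : BddAbove (Set.range fun f : {f : KuP u // ‖f‖ = 1} => ‖Cop u φ f.1‖) := by
    refine ⟨‖Cop u φ‖, ?_⟩
    rintro r ⟨f, rfl⟩
    simpa [f.2] using (Cop u φ).le_opNorm f.1
  have hsupS : (⨆ f, s f) = ‖Cop u φ‖ ^ 2 := by
    simp only [hs]
    rw [iSup_sq _ (fun f => norm_nonneg _) hbddC, iSup_sphere_norm _ hneP]
  -- sup t = ‖B‖² = ‖C‖²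
  have hBt : ∀ g : Ku u, ‖Bop u (conjL φ) g‖ ^ 2
      = ‖Top (conjL (mulL u φ)) (KuIncl u g)‖ ^ 2 + ‖Hop (conjL φ) (KuIncl u g)‖ ^ 2 := by
    intro g
    have : ‖Bop u (conjL φ) g‖
        = ‖(KuP u).orthogonalProjectionOnto (Mmul (conjL φ) (g : L2))‖ := rfl
    rw [this]
    exact norm_Bop_sq φ hu g
  have hbddB : BddAbove (Set.range fun g : {f : Ku u // ‖f‖ = 1} => ‖Bop u (conjL φ) g.1‖) := by
    refine ⟨‖Bop u (conjL φ)‖, ?_⟩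
    rintro r ⟨g, rfl⟩
    simpa [g.2] using (Bop u (conjL φ)).le_opNorm g.1
  have hsupT : (⨆ f, t f) = ‖Cop u φ‖ ^ 2 := by
    have h1 : (⨆ f : {f : Ku u // ‖f‖ = 1}, t f)
        = ⨆ f : {f : Ku u // ‖f‖ = 1}, ‖Bop u (conjL φ) f.1‖ ^ 2 := by
      refine iSup_congr fun f => ?_
      rw [ht, hBt f.1]
    rw [h1, iSup_sq _ (fun f => norm_nonneg _) hbddB, iSup_sphere_norm _ hneK,
      norm_Bop_eq_norm_Cop]
  -- part 1
  have heq : minMod (Dop u φ) = Real.sqrt (1 - ⨆ f, t f) := by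
    rw [hmm, hsupS, ← hsupT]
  refine ⟨heq, ?_, ?_⟩
  · -- lower bound
    set a : ℝ := ‖Top (conjL (mulL u φ)) ∘L KuIncl u‖ with ha
    set b : ℝ := ‖Hop (conjL φ) ∘L KuIncl u‖ with hb
    have hSle : (⨆ f, t f) ≤ a ^ 2 + b ^ 2 := by
      refine ciSup_le fun f => ?_
      have h1 : ‖Top (conjL (mulL u φ)) (KuIncl u f.1)‖ ≤ a := by
        simpa [f.2] using (Top (conjL (mulL u φ)) ∘L KuIncl u).le_opNorm f.1
      have h2 : ‖Hop (conjL φ) (KuIncl u f.1)‖ ≤ b := by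
        simpa [f.2] using (Hop (conjL φ) ∘L KuIncl u).le_opNorm f.1
      have := add_le_add (pow_le_pow_left₀ (norm_nonneg _) h1 2)
        (pow_le_pow_left₀ (norm_nonneg _) h2 2)
      simpa [ht] using this
    rw [heq, sqrt_max_zero]
    exact Real.sqrt_le_sqrt (by linarith)
  · -- upper bound
    set a : ℝ := ‖Top (conjL (mulL u φ)) ∘L KuIncl u‖ with ha
    set b : ℝ := ‖Hop (conjL φ) ∘L KuIncl u‖ with hb
    have hbddT : BddAbove (Set.range fun f : {f : Ku u // ‖f‖ = 1} => t f) := by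
      refine ⟨a ^ 2 + b ^ 2, ?_⟩
      rintro r ⟨f, rfl⟩
      have h1 : ‖Top (conjL (mulL u φ)) (KuIncl u f.1)‖ ≤ a := by
        simpa [f.2] using (Top (conjL (mulL u φ)) ∘L KuIncl u).le_opNorm f.1
      have h2 : ‖Hop (conjL φ) (KuIncl u f.1)‖ ≤ b := by
        simpa [f.2] using (Hop (conjL φ) ∘L KuIncl u).le_opNorm f.1
      have := add_le_add (pow_le_pow_left₀ (norm_nonneg _) h1 2)
        (pow_le_pow_left₀ (norm_nonneg _) h2 2)
      simpa [ht] using this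
    have hbddTa : BddAbove (Set.range fun f : {f : Ku u // ‖f‖ = 1}
        => ‖(Top (conjL (mulL u φ)) ∘L KuIncl u) f.1‖) := by
      refine ⟨a, ?_⟩
      rintro r ⟨f, rfl⟩
      simpa [f.2] using (Top (conjL (mulL u φ)) ∘L KuIncl u).le_opNorm f.1
    have hbddTb : BddAbove (Set.range fun f : {f : Ku u // ‖f‖ = 1}
        => ‖(Hop (conjL φ) ∘L KuIncl u) f.1‖) := by
      refine ⟨b, ?_⟩
      rintro r ⟨f, rfl⟩
      simpa [f.2] using (Hop (conjL φ) ∘L KuIncl u).le_opNorm f.1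
    have haS : a ^ 2 ≤ ⨆ f, t f := by
      have h1 : a ^ 2 = ⨆ f : {f : Ku u // ‖f‖ = 1},
          ‖(Top (conjL (mulL u φ)) ∘L KuIncl u) f.1‖ ^ 2 := by
        rw [iSup_sq _ (fun f => norm_nonneg _) hbddTa, iSup_sphere_norm _ hneK]
      rw [h1]
      refine ciSup_le fun f => le_ciSup_of_le hbddT f ?_
      simp only [ht, ContinuousLinearMap.comp_apply]
      exact le_add_of_nonneg_right (sq_nonneg _)
    have hbS : b ^ 2 ≤ ⨆ f, t f := by
      have h1 : b ^ 2 = ⨆ f : {f : Ku u // ‖f‖ = 1},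
          ‖(Hop (conjL φ) ∘L KuIncl u) f.1‖ ^ 2 := by
        rw [iSup_sq _ (fun f => norm_nonneg _) hbddTb, iSup_sphere_norm _ hneK]
      rw [h1]
      refine ciSup_le fun f => le_ciSup_of_le hbddT f ?_
      simp only [ht, ContinuousLinearMap.comp_apply]
      exact le_add_of_nonneg_left (sq_nonneg _)
    rw [heq]
    exact le_min (Real.sqrt_le_sqrt (by linarith)) (Real.sqrt_le_sqrt (by linarith))


end DTTO
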